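/- Let g and d be natural numbers with d ≥ 4 and g + 2 ≤ d. In the polynomial ring ℤ[x, y], the coefficient of the monomial x²y^{d−4} in (1 + 4x + y)^g · (1 + 2x + y)^{d−2−g} equals 2(g² + 2gd + d² − 5d − 7g + 6). -/

import Mathlib

open MvPolynomial

lemma helper1 {R : Type*} [CommSemiring R] (c u : R) (n j : ℕ) :
    ((Polynomial.C c * Polynomial.X + Polynomial.C u) ^ n).coeff j
      = (n.choose j : R) * c ^ j * u ^ (n - j) := by
  rw [add_pow, Polynomial.finset_sum_coeff]
  have hterm : ∀ k, ((Polynomial.C c * Polynomial.X) ^ k * Polynomial.C u ^ (n - k) *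
      (n.choose k : Polynomial R)).coeff j
      = if j = k then (n.choose k : R) * c ^ k * u ^ (n - k) else 0 := by
    intro k
    have h1 : (Polynomial.C c * Polynomial.X) ^ k * Polynomial.C u ^ (n - k) *
        (n.choose k : Polynomial R)
        = Polynomial.C ((n.choose k : R) * c ^ k * u ^ (n - k)) * Polynomial.X ^ k := by
      rw [← Polynomial.C_eq_natCast, mul_pow, ← Polynomial.C_pow, ← Polynomial.C_pow,
        map_mul, map_mul]
      ring
    rw [h1, Polynomial.coeff_C_mul, Polynomial.coeff_X_pow]
    by_cases h : j = k <;> simp [h]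
  simp only [hterm]
  rw [Finset.sum_ite_eq (Finset.range (n+1)) j]
  by_cases h : j ∈ Finset.range (n+1)
  · simp [h]
  · rw [if_neg h, Nat.choose_eq_zero_of_lt (by simpa using h)]
    simp

lemma helper2 (a k : ℕ) :
    MvPolynomial.coeff (Finsupp.single 0 k) ((1 + X 0 : MvPolynomial (Fin 1) ℤ) ^ a)
      = a.choose k := by
  have hidx : (Finsupp.single 0 k : Fin 1 →₀ ℕ) = Finsupp.cons k (0 : Fin 0 →₀ ℕ) := by
    refine Finsupp.ext fun i => ?_
    fin_cases i
    simp
  rw [hidx, ← MvPolynomial.finSuccEquiv_coeff_coeff]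
  have hF : MvPolynomial.finSuccEquiv ℤ 0 ((1 + X 0 : MvPolynomial (Fin 1) ℤ) ^ a)
      = (1 + Polynomial.X) ^ a := by
    rw [map_pow, map_add, map_one, MvPolynomial.finSuccEquiv_X_zero]
  rw [hF, add_comm (1 : Polynomial (MvPolynomial (Fin 0) ℤ)) Polynomial.X,
    Polynomial.coeff_X_add_one_pow, ← MvPolynomial.C_eq_coe_nat, MvPolynomial.coeff_zero_C]

lemma helper3 (N e k : ℕ) :
    MvPolynomial.coeff (Finsupp.single 0 k)
      ((N : MvPolynomial (Fin 1) ℤ) * (1 + X 0) ^ e) = (N : ℤ) * e.choose k := by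
  rw [← MvPolynomial.C_eq_coe_nat, MvPolynomial.coeff_C_mul, helper2]

lemma choose_two_int (x : ℕ) : (2 * x.choose 2 : ℤ) = (x : ℤ) ^ 2 - x := by
  induction x with
  | zero => simp
  | succ n ih =>
    rw [Nat.choose_succ_succ, Nat.choose_one_right]
    push_cast
    push_cast at ih
    linarith [ih]

lemma anti2 : (Finset.HasAntidiagonal.antidiagonal 2 : Finset (ℕ × ℕ)) = {(0,2),(1,1),(2,0)} := by decide

lemma coeff2_mul (p q : Polynomial (MvPolynomial (Fin 1) ℤ)) : (p * q).coeff 2 =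
    p.coeff 0 * q.coeff 2 + p.coeff 1 * q.coeff 1 + p.coeff 2 * q.coeff 0 := by
  rw [Polynomial.coeff_mul, anti2, Finset.sum_insert (by decide),
    Finset.sum_insert (by decide), Finset.sum_singleton]
  ring

/-- de Jonquières' formula evaluation: for `d ≥ 4` and `g + 2 ≤ d`, the coefficient of
`x² y^(d-4)` in `(1 + 4x + y)^g * (1 + 2x + y)^(d-2-g)` in `ℤ[x, y]` equals
`2(g² + 2gd + d² − 5d − 7g + 6)`. -/
theorem deJonquieres_coefficient (g d : ℕ) (hd : 4 ≤ d) (hgd : g + 2 ≤ d) :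
    MvPolynomial.coeff (Finsupp.single 0 2 + Finsupp.single 1 (d - 4))
      (((1 + 4 * X 0 + X 1) ^ g * (1 + 2 * X 0 + X 1) ^ (d - 2 - g)) :
        MvPolynomial (Fin 2) ℤ) =
      2 * ((g : ℤ) ^ 2 + 2 * g * d + d ^ 2 - 5 * d - 7 * g + 6) := by
  set m := d - 2 - g with hm
  set k := d - 4 with hk
  have hidx : (Finsupp.single 0 2 + Finsupp.single 1 k : Fin 2 →₀ ℕ)
      = Finsupp.cons 2 (Finsupp.single 0 k) := by
    refine Finsupp.ext fun i => ?_
    refine Fin.cases ?_ (fun j => ?_) i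
    · simp
    · fin_cases j
      rw [show (1 : Fin 2) = (0 : Fin 1).succ from rfl, Finsupp.cons_succ]
      simp [Finsupp.single_apply]
  rw [hidx, ← MvPolynomial.finSuccEquiv_coeff_coeff]
  have h1 : MvPolynomial.finSuccEquiv ℤ 1 (X 1) = Polynomial.C (X 0) := by
    have h : (1 : Fin 2) = (0 : Fin 1).succ := rfl
    rw [h, MvPolynomial.finSuccEquiv_X_succ]
  have hF : MvPolynomial.finSuccEquiv ℤ 1
      (((1 + 4 * X 0 + X 1) ^ g * (1 + 2 * X 0 + X 1) ^ m : MvPolynomial (Fin 2) ℤ))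
      = (Polynomial.C (4 : MvPolynomial (Fin 1) ℤ) * Polynomial.X
          + Polynomial.C (1 + X 0)) ^ g
        * (Polynomial.C (2 : MvPolynomial (Fin 1) ℤ) * Polynomial.X
          + Polynomial.C (1 + X 0)) ^ m := by
    simp only [map_mul, map_pow, map_add, map_one, map_ofNat, h1,
      MvPolynomial.finSuccEquiv_X_zero, Polynomial.C_1]
    ring
  rw [hF, coeff2_mul, helper1, helper1, helper1, helper1, helper1, helper1]
  simp only [Nat.sub_zero, pow_zero, pow_one, Nat.choose_zero_right, Nat.choose_one_right,
    Nat.cast_one, one_mul, mul_one]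
  have hE : (1 + X 0 : MvPolynomial (Fin 1) ℤ) ^ g *
        ((m.choose 2 : MvPolynomial (Fin 1) ℤ) * 2 ^ 2 * (1 + X 0) ^ (m - 2)) +
        (g : MvPolynomial (Fin 1) ℤ) * 4 * (1 + X 0) ^ (g - 1) *
          ((m : MvPolynomial (Fin 1) ℤ) * 2 * (1 + X 0) ^ (m - 1)) +
        (g.choose 2 : MvPolynomial (Fin 1) ℤ) * 4 ^ 2 * (1 + X 0) ^ (g - 2) * (1 + X 0) ^ m
      = ((4 * m.choose 2 : ℕ) : MvPolynomial (Fin 1) ℤ) * (1 + X 0) ^ (g + (m - 2))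
        + ((8 * (g * m) : ℕ) : MvPolynomial (Fin 1) ℤ) * (1 + X 0) ^ (g - 1 + (m - 1))
        + ((16 * g.choose 2 : ℕ) : MvPolynomial (Fin 1) ℤ) * (1 + X 0) ^ (g - 2 + m) := by
    push_cast
    ring
  rw [hE, MvPolynomial.coeff_add, MvPolynomial.coeff_add, helper3, helper3, helper3]
  have hgm : g + m = k + 2 := by omega
  have h0 : m.choose 2 * ((g + (m - 2)).choose k) = m.choose 2 := by
    rcases Nat.lt_or_ge m 2 with h | h
    · rw [Nat.choose_eq_zero_of_lt h]; simp
    · rw [show g + (m - 2) = k by omega, Nat.choose_self, mul_one]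
  have h1 : g * m * ((g - 1 + (m - 1)).choose k) = g * m := by
    rcases Nat.eq_zero_or_pos g with h | h
    · simp [h]
    rcases Nat.eq_zero_or_pos m with h' | h'
    · simp [h']
    rw [show g - 1 + (m - 1) = k by omega, Nat.choose_self, mul_one]
  have h2 : g.choose 2 * ((g - 2 + m).choose k) = g.choose 2 := by
    rcases Nat.lt_or_ge g 2 with h | h
    · rw [Nat.choose_eq_zero_of_lt h]; simp
    · rw [show g - 2 + m = k by omega, Nat.choose_self, mul_one]
  have e0 : ((4 * m.choose 2 : ℕ) : ℤ) * ((g + (m - 2)).choose k : ℤ)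
      = 4 * m.choose 2 := by
    rw [← Nat.cast_mul, mul_assoc, h0]; push_cast; ring
  have e1 : ((8 * (g * m) : ℕ) : ℤ) * ((g - 1 + (m - 1)).choose k : ℤ)
      = 8 * g * m := by
    rw [← Nat.cast_mul, mul_assoc, h1]; push_cast; ring
  have e2 : ((16 * g.choose 2 : ℕ) : ℤ) * ((g - 2 + m).choose k : ℤ)
      = 16 * g.choose 2 := by
    rw [← Nat.cast_mul, mul_assoc, h2]; push_cast; ring
  rw [e0, e1, e2]
  have hd' : (d : ℤ) = g + m + 2 := by
    have : d = g + m + 2 := by omega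
    exact_mod_cast this
  rw [hd']
  have cg := choose_two_int g
  have cm := choose_two_int m
  linear_combination 8 * cg + 2 * cm
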